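/- Let ℏ, m > 0, α ∈ ℝ, c ∈ ℂ, and let f : ℝ³ → ℂ be C¹ in a neighborhood of the origin. Define ψ : ℝ³ \ {0} → ℂ by ψ(y) = c/|y| + f(y), and suppose ψ satisfies the Bethe–Peierls boundary condition: for every ω ∈ S², lim_{r→0} [∂_r (r ψ(rω)) + α r ψ(rω)] = 0. Then the probability current into the origin vanishes: lim_{r→0} ∫_{S²} r² j_r(rω) d²ω = 0, where j_r(y) = (ℏ/m) Im[ψ(y)* ∂_r ψ(y)]. -/

import Mathlib

open Complex MeasureTheory Metric Real

set_option maxHeartbeats 2000000 in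
/-- **The Bethe–Peierls boundary condition leads to zero current into the origin.**
Let `ψ(y) = c/|y| + f(y)` on `ℝ³ \ {0}` with `f` of class `C¹` near the origin, and
suppose `ψ` satisfies the Bethe–Peierls boundary condition
`lim_{r→0} [∂_r(r ψ(rω)) + α r ψ(rω)] = 0` for every unit vector `ω`. Then the
probability flux through small spheres `∫_{S²} r² j_r(rω) d²ω` (with
`j_r = (ℏ/m) Im[ψ* ∂_r ψ]`) tends to `0` as `r → 0`. -/
theorem bethe_peierls_zero_current
    (ℏ m α : ℝ) (hℏ : 0 < ℏ) (hm : 0 < m) (c : ℂ)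
    (f ψ : EuclideanSpace ℝ (Fin 3) → ℂ)
    (U : Set (EuclideanSpace ℝ (Fin 3))) (hU : U ∈ nhds (0 : EuclideanSpace ℝ (Fin 3)))
    (hf : ContDiffOn ℝ 1 f U)
    (hψdef : ∀ y : EuclideanSpace ℝ (Fin 3), y ≠ 0 → ψ y = c / (‖y‖ : ℝ) + f y)
    -- Bethe–Peierls boundary condition: for every ω ∈ S²,
    -- lim_{r→0} [∂_r (r ψ(rω)) + α r ψ(rω)] = 0
    (hBP : ∀ ω : sphere (0 : EuclideanSpace ℝ (Fin 3)) 1,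
      Filter.Tendsto
        (fun r : ℝ =>
          deriv (fun s : ℝ => (s : ℂ) * ψ (s • (ω : EuclideanSpace ℝ (Fin 3)))) r
            + (α : ℂ) * (r : ℂ) * ψ (r • (ω : EuclideanSpace ℝ (Fin 3))))
        (nhdsWithin 0 (Set.Ioi 0)) (nhds 0)) :
    Filter.Tendsto
      (fun r : ℝ =>
        ∫ ω : sphere (0 : EuclideanSpace ℝ (Fin 3)) 1,
          r ^ 2 *
            ((ℏ / m) *
              ((starRingEnd ℂ) (ψ (r • (ω : EuclideanSpace ℝ (Fin 3)))) *
                deriv (fun s : ℝ => ψ (s • (ω : EuclideanSpace ℝ (Fin 3)))) r).im)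
          ∂((volume : Measure (EuclideanSpace ℝ (Fin 3))).toSphere))
      (nhdsWithin 0 (Set.Ioi 0)) (nhds 0) := by
  classical
  obtain ⟨ε, hε, hball⟩ := Metric.nhds_basis_closedBall.mem_iff.1 (interior_mem_nhds.2 hU)
  have hVopen : IsOpen (interior U) := isOpen_interior
  have hfV : ContDiffOn ℝ 1 f (interior U) := hf.mono interior_subset
  have hdiff : ∀ x ∈ interior U, DifferentiableAt ℝ f x := fun x hx =>
    (hfV.contDiffAt (hVopen.mem_nhds hx)).differentiableAt one_ne_zero
  have hcont : ContinuousOn (fderiv ℝ f) (interior U) :=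
    hfV.continuousOn_fderiv_of_isOpen hVopen le_rfl
  obtain ⟨M, hM⟩ := (isCompact_closedBall (0 : EuclideanSpace ℝ (Fin 3)) ε).exists_bound_of_continuousOn
    (hcont.mono hball)
  have h0mem : (0 : EuclideanSpace ℝ (Fin 3)) ∈ closedBall (0 : EuclideanSpace ℝ (Fin 3)) ε := by
    simp [hε.le]
  have hM0 : (0 : ℝ) ≤ M := le_trans (norm_nonneg _) (hM 0 h0mem)
  have h0V : (0 : EuclideanSpace ℝ (Fin 3)) ∈ interior U := hball h0mem
  -- Lipschitz estimate for f on the closed ball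
  have hlip : ∀ y ∈ closedBall (0 : EuclideanSpace ℝ (Fin 3)) ε, ‖f y - f 0‖ ≤ M * ‖y‖ := by
    intro y hy
    have := (convex_closedBall (0 : EuclideanSpace ℝ (Fin 3)) ε).norm_image_sub_le_of_norm_fderiv_le
      (fun x hx => hdiff x (hball hx)) hM h0mem hy
    simpa using this
  -- basic facts in a fixed direction
  have hmemball : ∀ (w : EuclideanSpace ℝ (Fin 3)), ‖w‖ = 1 → ∀ s : ℝ, |s| ≤ ε →
      s • w ∈ closedBall (0 : EuclideanSpace ℝ (Fin 3)) ε := by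
    intro w hw s hs
    simp only [mem_closedBall, dist_zero_right, norm_smul, hw, mul_one]
    exact hs
  have key : ∀ (w : EuclideanSpace ℝ (Fin 3)), ‖w‖ = 1 → ∀ r : ℝ, 0 < r → r ≤ ε →
      ψ (r • w) = c / (r : ℂ) + f (r • w) ∧
      HasDerivAt (fun s : ℝ => ψ (s • w)) (-c / (r : ℂ) ^ 2 + (fderiv ℝ f (r • w)) w) r ∧
      HasDerivAt (fun s : ℝ => (s : ℂ) * ψ (s • w))
        (f (r • w) + (r : ℂ) * (fderiv ℝ f (r • w)) w) r := by
    intro w hw r hr hrε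
    have hwne : w ≠ 0 := fun h => by simp [h] at hw
    have hrwmem : r • w ∈ closedBall (0 : EuclideanSpace ℝ (Fin 3)) ε :=
      hmemball w hw r (by rw [abs_of_pos hr]; exact hrε)
    have hψs : ∀ s : ℝ, 0 < s → ψ (s • w) = c / (s : ℂ) + f (s • w) := by
      intro s hs
      have hne : s • w ≠ 0 := smul_ne_zero hs.ne' hwne
      have hns : ‖s • w‖ = s := by rw [norm_smul, hw, mul_one, Real.norm_eq_abs, abs_of_pos hs]
      rw [hψdef _ hne, hns]
    have hrne : ((r : ℂ)) ≠ 0 := by exact_mod_cast hr.ne'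
    have hfd : HasDerivAt (fun s : ℝ => f (s • w)) ((fderiv ℝ f (r • w)) w) r := by
      have h1 : HasDerivAt (fun s : ℝ => s • w) w r := by
        simpa using (hasDerivAt_id r).smul_const w
      exact ((hdiff _ (hball hrwmem)).hasFDerivAt).comp_hasDerivAt r h1
    have hcd : HasDerivAt (fun s : ℝ => c / (s : ℂ)) (-c / (r : ℂ) ^ 2) r := by
      have h1 : HasDerivAt (fun z : ℂ => c * z⁻¹) (c * -((r : ℂ) ^ 2)⁻¹) (r : ℂ) :=
        (hasDerivAt_inv hrne).const_mul c
      have h2 := h1.comp_ofReal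
      have h3 : c * -((r : ℂ) ^ 2)⁻¹ = -c / (r : ℂ) ^ 2 := by
        field_simp
      rw [h3] at h2
      simpa [div_eq_mul_inv] using h2
    refine ⟨hψs r hr, ?_, ?_⟩
    · refine (hcd.add hfd).congr_of_eventuallyEq ?_
      filter_upwards [Ioi_mem_nhds hr] with s hs
      rw [hψs s hs]
      rfl
    · have h1 : HasDerivAt (fun s : ℝ => ((s : ℂ))) 1 r := by
        simpa using (hasDerivAt_id r).ofReal_comp
      have hmul : HasDerivAt (fun s : ℝ => (s : ℂ) * f (s • w))
          (1 * f (r • w) + (r : ℂ) * (fderiv ℝ f (r • w)) w) r := h1.mul hfd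
      have h2 : HasDerivAt (fun s : ℝ => c + (s : ℂ) * f (s • w))
          (f (r • w) + (r : ℂ) * (fderiv ℝ f (r • w)) w) r := by
        simpa using hmul
      refine h2.congr_of_eventuallyEq ?_
      filter_upwards [Ioi_mem_nhds hr] with s hs
      have hsne : ((s : ℂ)) ≠ 0 := by exact_mod_cast hs.ne' -- hs : s ∈ Ioi 0
      rw [hψs s hs]
      field_simp
  -- the value f 0 from the boundary condition
  obtain ⟨w₀, hw₀⟩ : (sphere (0 : EuclideanSpace ℝ (Fin 3)) 1).Nonempty :=
    NormedSpace.sphere_nonempty.mpr zero_le_one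
  have hw₀n : ‖w₀‖ = 1 := by simpa using mem_sphere_zero_iff_norm.1 hw₀
  have hεIoo : Set.Ioo (0 : ℝ) ε ∈ nhdsWithin (0 : ℝ) (Set.Ioi 0) :=
    Ioo_mem_nhdsGT hε
  have htr : Filter.Tendsto (fun r : ℝ => r) (nhdsWithin 0 (Set.Ioi 0)) (nhds 0) :=
    Filter.tendsto_id.mono_right nhdsWithin_le_nhds
  have htrC : Filter.Tendsto (fun r : ℝ => ((r : ℂ))) (nhdsWithin 0 (Set.Ioi 0)) (nhds 0) := by
    have := (Complex.continuous_ofReal.tendsto 0).comp htr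
    simpa [Function.comp_def] using this
  have hsm : ∀ (w : EuclideanSpace ℝ (Fin 3)),
      Filter.Tendsto (fun r : ℝ => r • w) (nhdsWithin 0 (Set.Ioi 0))
        (nhds (0 : EuclideanSpace ℝ (Fin 3))) := by
    intro w
    have h1 : Continuous (fun r : ℝ => r • w) := continuous_id.smul continuous_const
    have := (h1.tendsto 0).comp htr
    simpa [Function.comp_def] using this
  have htf : ∀ (w : EuclideanSpace ℝ (Fin 3)),
      Filter.Tendsto (fun r : ℝ => f (r • w)) (nhdsWithin 0 (Set.Ioi 0)) (nhds (f 0)) := by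
    intro w
    exact ((hdiff 0 h0V).continuousAt.tendsto).comp (hsm w)
  have htF : Filter.Tendsto (fun r : ℝ => (r : ℂ) * (fderiv ℝ f (r • w₀)) w₀)
      (nhdsWithin 0 (Set.Ioi 0)) (nhds 0) := by
    apply squeeze_zero_norm' (a := fun r : ℝ => M * r)
    · filter_upwards [hεIoo] with r hr
      have hb : ‖(fderiv ℝ f (r • w₀)) w₀‖ ≤ M := by
        calc ‖(fderiv ℝ f (r • w₀)) w₀‖ ≤ ‖fderiv ℝ f (r • w₀)‖ * ‖w₀‖ :=
              (fderiv ℝ f (r • w₀)).le_opNorm w₀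
        _ = ‖fderiv ℝ f (r • w₀)‖ := by rw [hw₀n, mul_one]
        _ ≤ M := hM _ (hmemball w₀ hw₀n r (by rw [abs_of_pos hr.1]; exact hr.2.le))
      calc ‖(r : ℂ) * (fderiv ℝ f (r • w₀)) w₀‖ = |r| * ‖(fderiv ℝ f (r • w₀)) w₀‖ := by
            rw [norm_mul]; simp
      _ ≤ |r| * M := by gcongr
      _ = M * r := by rw [abs_of_pos hr.1, mul_comm]
    · simpa using tendsto_const_nhds.mul htr
  have hBPlim : Filter.Tendsto
      (fun r : ℝ => deriv (fun s : ℝ => (s : ℂ) * ψ (s • w₀)) r + (α : ℂ) * (r : ℂ) * ψ (r • w₀))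
      (nhdsWithin 0 (Set.Ioi 0)) (nhds (f 0 + (α : ℂ) * c)) := by
    have hcongr : ∀ᶠ (r : ℝ) in nhdsWithin (0 : ℝ) (Set.Ioi 0),
        (f (r • w₀) + (r : ℂ) * (fderiv ℝ f (r • w₀)) w₀)
          + ((α : ℂ) * c + (α : ℂ) * ((r : ℂ) * f (r • w₀)))
        = deriv (fun s : ℝ => (s : ℂ) * ψ (s • w₀)) r + (α : ℂ) * (r : ℂ) * ψ (r • w₀) := by
      filter_upwards [hεIoo] with r hr
      obtain ⟨h1, h2, h3⟩ := key w₀ hw₀n r hr.1 hr.2.le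
      rw [h3.deriv, h1]
      have hrne : ((r : ℂ)) ≠ 0 := by exact_mod_cast hr.1.ne'
      field_simp
    have hlim := (Filter.Tendsto.add (htf w₀) htF).add
      ((tendsto_const_nhds (x := (α : ℂ) * c)).add
        ((tendsto_const_nhds (x := (α : ℂ))).mul (htrC.mul (htf w₀))))
    refine Filter.Tendsto.congr' hcongr ?_
    simpa using hlim
  have hf0 : f 0 = -(α : ℂ) * c := by
    have hu := tendsto_nhds_unique hBPlim (hBP ⟨w₀, hw₀⟩)
    linear_combination hu
  -- main estimate
  set μ := (volume : Measure (EuclideanSpace ℝ (Fin 3))).toSphere with hμ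
  set K : ℝ := (ℏ / m) * (2 * ‖c‖ * M + ε * ((‖f 0‖ + M * ε) * M)) with hK
  have hKpos : 0 ≤ K := by positivity
  apply squeeze_zero_norm' (a := fun r : ℝ => (K * (μ Set.univ).toReal) * r)
  · filter_upwards [hεIoo] with r hr
    have hr0 : 0 < r := hr.1
    have hrε : r ≤ ε := hr.2.le
    have hrne : ((r : ℂ)) ≠ 0 := by exact_mod_cast hr0.ne'
    have hbound : ∀ ω : sphere (0 : EuclideanSpace ℝ (Fin 3)) 1,
        ‖r ^ 2 * ((ℏ / m) *
          ((starRingEnd ℂ) (ψ (r • (ω : EuclideanSpace ℝ (Fin 3)))) *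
            deriv (fun s : ℝ => ψ (s • (ω : EuclideanSpace ℝ (Fin 3)))) r).im)‖ ≤ K * r := by
      intro ω
      set w : EuclideanSpace ℝ (Fin 3) := (ω : EuclideanSpace ℝ (Fin 3)) with hwdef
      have hwn : ‖w‖ = 1 := by simp [hwdef]
      obtain ⟨h1, h2, h3⟩ := key w hwn r hr0 hrε
      set a : ℂ := f (r • w) with ha
      set b : ℂ := (fderiv ℝ f (r • w)) w with hb
      have hble : ‖b‖ ≤ M := by
        calc ‖b‖ ≤ ‖fderiv ℝ f (r • w)‖ * ‖w‖ := (fderiv ℝ f (r • w)).le_opNorm w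
        _ = ‖fderiv ℝ f (r • w)‖ := by rw [hwn, mul_one]
        _ ≤ M := hM _ (hmemball w hwn r (by rw [abs_of_pos hr0]; exact hrε))
      have hale : ‖a - f 0‖ ≤ M * r := by
        have := hlip (r • w) (hmemball w hwn r (by rw [abs_of_pos hr0]; exact hrε))
        calc ‖a - f 0‖ ≤ M * ‖r • w‖ := this
        _ = M * r := by rw [norm_smul, hwn, mul_one, Real.norm_eq_abs, abs_of_pos hr0]
      have hanorm : ‖a‖ ≤ ‖f 0‖ + M * ε := by
        calc ‖a‖ = ‖f 0 + (a - f 0)‖ := by ring_nf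
        _ ≤ ‖f 0‖ + ‖a - f 0‖ := norm_add_le _ _
        _ ≤ ‖f 0‖ + M * r := by gcongr
        _ ≤ ‖f 0‖ + M * ε := by gcongr
      rw [h2.deriv, h1]
      set X : ℂ := (starRingEnd ℂ) (c / (r : ℂ) + a) * (-c / (r : ℂ) ^ 2 + b) with hX
      set W : ℂ := (starRingEnd ℂ) c * b * (r : ℂ) - c * (starRingEnd ℂ) (a - f 0)
        + (r : ℂ) ^ 2 * ((starRingEnd ℂ) a * b) with hW
      have hZ : ((r : ℂ)) ^ 2 * X =
          ((α * Complex.normSq c - Complex.normSq c / r : ℝ) : ℂ) + W := by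
        rw [hX, hW, hf0]
        have hns : ((Complex.normSq c : ℝ) : ℂ) = (starRingEnd ℂ) c * c :=
          Complex.normSq_eq_conj_mul_self
        push_cast
        rw [hns]
        simp only [map_add, map_sub, map_mul, map_neg, map_div₀, Complex.conj_ofReal]
        field_simp
        ring
      have himeq : r ^ 2 * X.im = (((r : ℂ)) ^ 2 * X).im := by
        have : ((r : ℂ)) ^ 2 = ((r ^ 2 : ℝ) : ℂ) := by push_cast; ring
        rw [this, Complex.im_ofReal_mul]
      have hWim : (((r : ℂ)) ^ 2 * X).im = W.im := by
        rw [hZ]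
        simp
      have hWbound : |W.im| ≤ (2 * ‖c‖ * M + ε * ((‖f 0‖ + M * ε) * M)) * r := by
        calc |W.im| ≤ ‖W‖ := Complex.abs_im_le_norm W
        _ = ‖W‖ := rfl
        _ ≤ ‖(starRingEnd ℂ) c * b * (r : ℂ)‖ + ‖c * (starRingEnd ℂ) (a - f 0)‖
            + ‖(r : ℂ) ^ 2 * ((starRingEnd ℂ) a * b)‖ := by
              rw [hW]
              exact le_trans (norm_add_le _ _) (by gcongr; exact norm_sub_le _ _)
        _ ≤ ‖c‖ * M * r + ‖c‖ * (M * r) + r ^ 2 * (‖a‖ * M) := by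
              have h1 : ‖((r : ℂ))‖ = r := by
                rw [Complex.norm_real, Real.norm_eq_abs, abs_of_pos hr0]
              simp only [norm_mul, norm_pow, RCLike.norm_conj, h1]
              gcongr
        _ ≤ (2 * ‖c‖ * M + ε * ((‖f 0‖ + M * ε) * M)) * r := by
              have e1 : ‖a‖ * M ≤ (‖f 0‖ + M * ε) * M :=
                mul_le_mul_of_nonneg_right hanorm hM0
              have e2 : r ^ 2 ≤ ε * r := by nlinarith
              have e3 : r ^ 2 * (‖a‖ * M) ≤ (ε * r) * ((‖f 0‖ + M * ε) * M) :=
                mul_le_mul e2 e1 (by positivity) (by positivity)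
              nlinarith [norm_nonneg c]
      calc ‖r ^ 2 * ((ℏ / m) * X.im)‖ = (ℏ / m) * |r ^ 2 * X.im| := by
            rw [Real.norm_eq_abs]
            rw [show r ^ 2 * ((ℏ / m) * X.im) = (ℏ / m) * (r ^ 2 * X.im) by ring]
            rw [abs_mul, abs_of_pos (by positivity : (0:ℝ) < ℏ / m)]
      _ = (ℏ / m) * |W.im| := by rw [himeq, hWim]
      _ ≤ (ℏ / m) * ((2 * ‖c‖ * M + ε * ((‖f 0‖ + M * ε) * M)) * r) := by
            gcongr
      _ = K * r := by rw [hK]; ring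
    calc ‖∫ ω : sphere (0 : EuclideanSpace ℝ (Fin 3)) 1,
        r ^ 2 * ((ℏ / m) *
          ((starRingEnd ℂ) (ψ (r • (ω : EuclideanSpace ℝ (Fin 3)))) *
            deriv (fun s : ℝ => ψ (s • (ω : EuclideanSpace ℝ (Fin 3)))) r).im) ∂μ‖
        ≤ (K * r) * (μ Set.univ).toReal :=
          norm_integral_le_of_norm_le_const (Filter.Eventually.of_forall hbound)
    _ = (K * (μ Set.univ).toReal) * r := by ring
  · simpa only [mul_zero] using (tendsto_const_nhds (x := K * (μ Set.univ).toReal)).mul htr
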